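/- Under the LocalGD iteration r^{(t+1)} = r^{(t)} − Q r_{S_t}^{(t)} with Q = I − βP, P ≥ 0 entrywise, βP_max < 1 (P_max an upper bound on ||Pv||_1/||v||_1 for nonnegative v), and r^{(0)} ≥ 0, the residual norms ||r^{(t)}||_1 form a monotonically nonincreasing sequence and each r^{(t)} is entrywise nonnegative. -/
import Mathlib


open Matrix

/-- Along the LocalGD iteration `r^{(t+1)} = r^{(t)} - Q r_{S_t}^{(t)}` with
`Q = I - βP`, `P ≥ 0`, `β P_max < 1` (`P_max` an upper bound on `‖Pv‖₁/‖v‖₁`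
for nonnegative `v`), and `r^{(0)} ≥ 0`, every residual is entrywise nonnegative
and the ℓ1 norms of the residuals are monotonically nonincreasing. -/
theorem localGD_nonneg_monotone (n : ℕ) (P : Matrix (Fin n) (Fin n) ℝ)
    (hP : ∀ i j, 0 ≤ P i j) (β : ℝ) (hβ : 0 ≤ β)
    (Pmax : ℝ)
    (hPmax : ∀ v : Fin n → ℝ, (∀ i, 0 ≤ v i) →
      ∑ i, |(P *ᵥ v) i| ≤ Pmax * ∑ i, |v i|)
    (hβP : β * Pmax < 1)
    (r : ℕ → Fin n → ℝ) (hr0 : ∀ i, 0 ≤ r 0 i)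
    (S : ℕ → Finset (Fin n))
    (hrec : ∀ t, r (t + 1) =
      r t - (1 - β • P) *ᵥ (fun i => if i ∈ S t then r t i else 0)) :
    (∀ t i, 0 ≤ r t i) ∧ ∀ t, (∑ i, |r (t + 1) i|) ≤ ∑ i, |r t i| := by
  have key : ∀ t, (∀ i, 0 ≤ r t i) →
      (∀ i, 0 ≤ r (t+1) i) ∧ (∑ i, |r (t + 1) i|) ≤ ∑ i, |r t i| := by
    intro t ht
    set s : Fin n → ℝ := fun i => if i ∈ S t then r t i else 0 with hs
    have hsnn : ∀ i, 0 ≤ s i := by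
      intro i; simp only [hs]
      split
      · exact ht i
      · exact le_refl 0
    have hsle : ∀ i, s i ≤ r t i := by
      intro i; simp only [hs]
      split
      · exact le_refl _
      · exact ht i
    have hPs : ∀ i, 0 ≤ (P *ᵥ s) i := by
      intro i
      rw [Matrix.mulVec, dotProduct]
      exact Finset.sum_nonneg fun j _ => mul_nonneg (hP i j) (hsnn j)
    have hform : ∀ i, r (t + 1) i = (r t i - s i) + β * (P *ᵥ s) i := by
      intro i
      rw [hrec t]
      simp [Matrix.sub_mulVec, Matrix.one_mulVec, Matrix.smul_mulVec,
        Pi.smul_apply, smul_eq_mul, ← hs]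
      ring
    have hnn : ∀ i, 0 ≤ r (t + 1) i := by
      intro i
      rw [hform i]
      have := hsle i
      have := mul_nonneg hβ (hPs i)
      linarith
    refine ⟨hnn, ?_⟩
    have habs : ∀ i, |r (t + 1) i| = r (t + 1) i := fun i => abs_of_nonneg (hnn i)
    have habs' : ∀ i, |r t i| = r t i := fun i => abs_of_nonneg (ht i)
    have hsum : ∑ i, |r (t + 1) i| =
        (∑ i, (r t i - s i)) + β * ∑ i, (P *ᵥ s) i := by
      rw [Finset.mul_sum, ← Finset.sum_add_distrib]
      exact Finset.sum_congr rfl fun i _ => by rw [habs i, hform i]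
    have hX : (0:ℝ) ≤ ∑ i, s i := Finset.sum_nonneg fun i _ => hsnn i
    have hPb : ∑ i, (P *ᵥ s) i ≤ Pmax * ∑ i, s i := by
      have := hPmax s hsnn
      simpa [abs_of_nonneg, hPs, hsnn,
        Finset.sum_congr rfl (fun i _ => abs_of_nonneg (hPs i)),
        Finset.sum_congr rfl (fun i _ => abs_of_nonneg (hsnn i))] using this
    have hβPs : β * ∑ i, (P *ᵥ s) i ≤ ∑ i, s i := by
      have h1 : β * ∑ i, (P *ᵥ s) i ≤ β * (Pmax * ∑ i, s i) :=
        mul_le_mul_of_nonneg_left hPb hβ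
      have h2 : β * (Pmax * ∑ i, s i) ≤ 1 * ∑ i, s i := by
        rw [← mul_assoc]
        exact mul_le_mul_of_nonneg_right hβP.le hX
      linarith
    rw [hsum]
    have : ∑ i, |r t i| = (∑ i, (r t i - s i)) + ∑ i, s i := by
      rw [← Finset.sum_add_distrib]
      exact Finset.sum_congr rfl fun i _ => by rw [habs' i]; ring
    rw [this]
    linarith
  have hnn : ∀ t i, 0 ≤ r t i := by
    intro t
    induction t with
    | zero => exact hr0
    | succ k ih => exact (key k ih).1
  exact ⟨hnn, fun t => (key t (hnn t)).2⟩
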